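/- Let n ≥ 2, 1 ≤ q ≤ n−1, 1 ≤ k ≤ n−q, ε > 0, and 2 ≤ m real. Suppose 0 < τ_1 ≤ τ_2 ≤ ... ≤ τ_n with τ_1 ≤ C ε, τ_j ≤ C ε^{1/m} for all j, and γ := r/(r−1) where r := (n−q+1)m + 2q. Then with τ_2 ≥ c ε^{1/2}: ∫_{|w_1|<τ_1, ..., |w_n|<τ_n} (Σ_{l=1}^n |w_l|)^{−(2n−2k−1)γ} · (Π_{l=2}^{k} τ_l^{2})^{−γ} dVol(w) ≤ C' ε^{2γ} (sum over admissible k bounded by C'' ε^{2γ}), where the integral is over w ∈ ℂ^n with the stated polydisc constraints and C', C'' depend only on n, q, m, C, c. -/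

import Mathlib

open MeasureTheory ENNReal

set_option maxHeartbeats 2000000


lemma my_lintegral_pi_prod : ∀ (n : ℕ) (f : Fin n → ℂ → ℝ≥0∞), (∀ i, Measurable (f i)) →
    ∫⁻ w : Fin n → ℂ, ∏ i, f i (w i) = ∏ i, ∫⁻ z, f i z := by
  intro n
  induction n with
  | zero =>
    intro f _
    simp only [Finset.univ_eq_empty, Finset.prod_empty, lintegral_const, one_mul]
    rw [MeasureTheory.volume_pi, MeasureTheory.Measure.pi_univ]
    simp
  | succ n ih =>
    intro f hf
    have hmp := MeasureTheory.volume_preserving_piFinSuccAbove (fun _ : Fin (n+1) => ℂ) 0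
    have hG : Measurable (fun p : ℂ × (Fin n → ℂ) => f 0 p.1 * ∏ i, f i.succ (p.2 i)) := by
      apply Measurable.mul
      · exact (hf 0).comp measurable_fst
      · exact Finset.measurable_prod _ fun i _ =>
          (hf i.succ).comp ((measurable_pi_apply i).comp measurable_snd)
    have key : ∀ w : Fin (n+1) → ℂ, (∏ i, f i (w i)) =
        (fun p : ℂ × (Fin n → ℂ) => f 0 p.1 * ∏ i, f i.succ (p.2 i))
          ((MeasurableEquiv.piFinSuccAbove (fun _ => ℂ) 0) w) := by
      intro w
      simp [MeasurableEquiv.piFinSuccAbove, Fin.removeNth, Fin.zero_succAbove,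
        Fin.prod_univ_succ, Fin.tail]
    calc ∫⁻ w : Fin (n+1) → ℂ, ∏ i, f i (w i)
        = ∫⁻ p : ℂ × (Fin n → ℂ), f 0 p.1 * ∏ i, f i.succ (p.2 i) := by
          rw [← hmp.lintegral_comp hG]
          exact lintegral_congr key
      _ = (∫⁻ z, f 0 z) * ∫⁻ y : Fin n → ℂ, ∏ i, f i.succ (y i) :=
          lintegral_prod_mul (hf 0).aemeasurable
            (Finset.measurable_prod Finset.univ
              (fun (i : Fin n) _ => (hf i.succ).comp (measurable_pi_apply i))).aemeasurable
      _ = ∏ i, ∫⁻ z, f i z := by rw [ih _ fun i => hf i.succ, Fin.prod_univ_succ]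

lemma my_meas_ofReal_abs_rpow (a : ℝ) :
    Measurable (fun x : ℝ => ENNReal.ofReal (|x| ^ (-a))) := by fun_prop

lemma my_lintegral_Ioo_pos (a τ : ℝ) (ha0 : 0 ≤ a) (ha1 : a < 1) (hτ : 0 < τ) :
    ∫⁻ x : ℝ in Set.Ioo 0 τ, ENNReal.ofReal (|x| ^ (-a)) =
      ENNReal.ofReal (τ ^ (1 - a) / (1 - a)) := by
  have hset : ∫⁻ x : ℝ in Set.Ioo 0 τ, ENNReal.ofReal (|x| ^ (-a)) =
      ∫⁻ x : ℝ in Set.Ioo 0 τ, ENNReal.ofReal (x ^ (-a)) := by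
    refine setLIntegral_congr_fun measurableSet_Ioo (fun x hx => ?_)
    rw [abs_of_pos hx.1]
  rw [hset]
  have hint : IntegrableOn (fun x : ℝ => x ^ (-a)) (Set.Ioo 0 τ) := by
    have := (intervalIntegral.intervalIntegrable_rpow' (a := 0) (b := τ)
      (r := -a) (by linarith)).1
    exact (this.mono_set Set.Ioo_subset_Ioc_self)
  rw [← ofReal_integral_eq_lintegral_ofReal hint
    ((ae_restrict_iff' measurableSet_Ioo).2 (ae_of_all _ fun x hx =>
      Real.rpow_nonneg hx.1.le _))]
  congr 1
  rw [← MeasureTheory.integral_Ioc_eq_integral_Ioo,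
    ← intervalIntegral.integral_of_le hτ.le,
    integral_rpow (Or.inl (by linarith))]
  rw [Real.zero_rpow (by linarith : -a + 1 ≠ 0)]
  ring_nf

lemma my_lintegral_Ioo_abs (a τ : ℝ) (ha0 : 0 ≤ a) (ha1 : a < 1) (hτ : 0 < τ) :
    ∫⁻ x : ℝ in Set.Ioo (-τ) τ, ENNReal.ofReal (|x| ^ (-a)) ≤
      ENNReal.ofReal (2 / (1 - a) * τ ^ (1 - a)) := by
  have hneg : ∫⁻ x : ℝ in Set.Ioc (-τ) 0, ENNReal.ofReal (|x| ^ (-a)) =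
      ENNReal.ofReal (τ ^ (1 - a) / (1 - a)) := by
    conv_lhs => rw [← Measure.map_neg_eq_self (volume : Measure ℝ)]
    rw [setLIntegral_map measurableSet_Ioc (my_meas_ofReal_abs_rpow a) measurable_neg]
    have hpre : (Neg.neg : ℝ → ℝ) ⁻¹' (Set.Ioc (-τ) 0) = Set.Ico 0 τ := by
      ext x
      simp only [Set.mem_preimage, Set.mem_Ioc, Set.mem_Ico]
      constructor
      · rintro ⟨h1, h2⟩; exact ⟨by linarith, by linarith⟩
      · rintro ⟨h1, h2⟩; exact ⟨by linarith, by linarith⟩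
    rw [hpre]
    have : (volume : Measure ℝ).restrict (Set.Ico 0 τ) =
        (volume : Measure ℝ).restrict (Set.Ioo 0 τ) := by
      exact (Measure.restrict_congr_set (MeasureTheory.Ioo_ae_eq_Ico)).symm
    simp only [abs_neg]
    rw [this, my_lintegral_Ioo_pos a τ ha0 ha1 hτ]
  have hsub : Set.Ioo (-τ) τ ⊆ Set.Ioc (-τ) 0 ∪ Set.Ioo 0 τ := by
    intro x hx
    rcases le_or_gt x 0 with h | h
    · exact Or.inl ⟨hx.1, h⟩
    · exact Or.inr ⟨h, hx.2⟩
  calc ∫⁻ x : ℝ in Set.Ioo (-τ) τ, ENNReal.ofReal (|x| ^ (-a))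
      ≤ ∫⁻ x : ℝ in Set.Ioc (-τ) 0 ∪ Set.Ioo 0 τ, ENNReal.ofReal (|x| ^ (-a)) :=
        lintegral_mono_set hsub
    _ ≤ (∫⁻ x : ℝ in Set.Ioc (-τ) 0, ENNReal.ofReal (|x| ^ (-a))) +
        ∫⁻ x : ℝ in Set.Ioo 0 τ, ENNReal.ofReal (|x| ^ (-a)) := lintegral_union_le _ _ _
    _ = ENNReal.ofReal (τ ^ (1 - a) / (1 - a)) + ENNReal.ofReal (τ ^ (1 - a) / (1 - a)) := by
        rw [hneg, my_lintegral_Ioo_pos a τ ha0 ha1 hτ]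
    _ ≤ ENNReal.ofReal (2 / (1 - a) * τ ^ (1 - a)) := by
        rw [← ENNReal.ofReal_add (div_nonneg (Real.rpow_nonneg hτ.le _) (by linarith)) (div_nonneg (Real.rpow_nonneg hτ.le _) (by linarith))]
        apply ENNReal.ofReal_le_ofReal
        ring_nf
        rfl
lemma my_disc_lintegral (a τ : ℝ) (ha0 : 0 ≤ a) (ha1 : a < 1) (hτ : 0 < τ) :
    ∫⁻ z : ℂ in Metric.ball 0 τ,
        (ENNReal.ofReal |z.re|) ^ (-a) * (ENNReal.ofReal |z.im|) ^ (-a) ≤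
      ENNReal.ofReal ((2 / (1 - a) * τ ^ (1 - a)) ^ 2) := by
  have h2a : (0:ℝ) ≤ 2 / (1 - a) * τ ^ (1 - a) :=
    mul_nonneg (div_nonneg (by norm_num) (by linarith)) (Real.rpow_nonneg hτ.le _)
  have hsub : Metric.ball (0:ℂ) τ ⊆ Complex.measurableEquivRealProd ⁻¹' (Set.Ioo (-τ) τ ×ˢ Set.Ioo (-τ) τ) := by
    intro z hz
    simp only [Metric.mem_ball, Complex.dist_eq, sub_zero] at hz
    have hre : |z.re| < τ := lt_of_le_of_lt (Complex.abs_re_le_norm z) hz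
    have him : |z.im| < τ := lt_of_le_of_lt (Complex.abs_im_le_norm z) hz
    constructor
    · exact ⟨neg_lt_of_abs_lt hre, lt_of_abs_lt hre⟩
    · exact ⟨neg_lt_of_abs_lt him, lt_of_abs_lt him⟩
  have habs : ∀ x : ℝ, Measurable (fun t : ℝ => (ENNReal.ofReal |t|) ^ (-a)) := by
    intro _; fun_prop
  calc ∫⁻ z : ℂ in Metric.ball 0 τ,
          (ENNReal.ofReal |z.re|) ^ (-a) * (ENNReal.ofReal |z.im|) ^ (-a)
      ≤ ∫⁻ z : ℂ in Complex.measurableEquivRealProd ⁻¹' (Set.Ioo (-τ) τ ×ˢ Set.Ioo (-τ) τ),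
          (ENNReal.ofReal |z.re|) ^ (-a) * (ENNReal.ofReal |z.im|) ^ (-a) :=
        lintegral_mono_set hsub
    _ = ∫⁻ p : ℝ × ℝ in Set.Ioo (-τ) τ ×ˢ Set.Ioo (-τ) τ,
          (ENNReal.ofReal |p.1|) ^ (-a) * (ENNReal.ofReal |p.2|) ^ (-a) := by
        exact Complex.volume_preserving_equiv_real_prod.setLIntegral_comp_preimage_emb
          Complex.measurableEquivRealProd.measurableEmbedding
          (fun p : ℝ × ℝ => (ENNReal.ofReal |p.1|) ^ (-a) * (ENNReal.ofReal |p.2|) ^ (-a))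
          (Set.Ioo (-τ) τ ×ˢ Set.Ioo (-τ) τ)
    _ = (∫⁻ x : ℝ in Set.Ioo (-τ) τ, (ENNReal.ofReal |x|) ^ (-a)) *
        (∫⁻ x : ℝ in Set.Ioo (-τ) τ, (ENNReal.ofReal |x|) ^ (-a)) := by
        rw [Measure.volume_eq_prod, ← Measure.prod_restrict]
        exact lintegral_prod_mul (habs 0).aemeasurable (habs 0).aemeasurable
    _ ≤ ENNReal.ofReal ((2 / (1 - a) * τ ^ (1 - a)) ^ 2) := by
        have hcongr : ∫⁻ x : ℝ in Set.Ioo (-τ) τ, (ENNReal.ofReal |x|) ^ (-a) =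
            ∫⁻ x : ℝ in Set.Ioo (-τ) τ, ENNReal.ofReal (|x| ^ (-a)) := by
          apply lintegral_congr_ae
          have h0 : ∀ᵐ x : ℝ ∂(volume.restrict (Set.Ioo (-τ) τ)), x ≠ 0 := by
            apply ae_restrict_of_ae
            rw [ae_iff]
            have hset0 : {x : ℝ | ¬ x ≠ 0} = ({0} : Set ℝ) := by ext x; simp
            rw [hset0]
            exact measure_singleton 0
          filter_upwards [h0] with x hx
          rw [ENNReal.ofReal_rpow_of_pos (abs_pos.2 hx)]
        rw [hcongr, sq, ENNReal.ofReal_mul h2a]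
        exact mul_le_mul' (my_lintegral_Ioo_abs a τ ha0 ha1 hτ)
          (my_lintegral_Ioo_abs a τ ha0 ha1 hτ)


lemma my_sqrt_absmul_le (z : ℂ) : Real.sqrt (|z.re| * |z.im|) ≤ ‖z‖ := by
  rw [Complex.norm_def]
  apply Real.sqrt_le_sqrt
  rw [Complex.normSq_apply]
  nlinarith [sq_nonneg (|z.re| - |z.im|), abs_mul_abs_self z.re, abs_mul_abs_self z.im,
    mul_nonneg (abs_nonneg z.re) (abs_nonneg z.im)]
theorem stmt_18 (n q k : ℕ) (hn : 2 ≤ n) (hq1 : 1 ≤ q) (hq2 : q ≤ n - 1)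
    (hk1 : 1 ≤ k) (hk2 : k ≤ n - q) (m C c : ℝ) (hm : 2 ≤ m) (hC : 0 < C) (hc : 0 < c) :
    ∃ C' > (0 : ℝ), ∀ ε : ℝ, 0 < ε → ∀ τ : ℕ → ℝ,
      (∀ l, 1 ≤ l → l ≤ n → 0 < τ l) →
      (∀ i j, 1 ≤ i → i ≤ j → j ≤ n → τ i ≤ τ j) →
      τ 1 ≤ C * ε →
      (∀ l, 1 ≤ l → l ≤ n → τ l ≤ C * ε ^ (1 / m)) →
      c * ε ^ ((1 : ℝ) / 2) ≤ τ 2 →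
      (∫⁻ w in {w : Fin n → ℂ | ∀ l : Fin n, ‖w l‖ < τ (l.1 + 1)},
          ENNReal.ofReal
            ((∑ l, ‖w l‖) ^
                (-((2 * (n : ℝ) - 2 * (k : ℝ) - 1) *
                  ((((n : ℝ) - q + 1) * m + 2 * q) / ((((n : ℝ) - q + 1) * m + 2 * q) - 1)))) /
              (∏ l ∈ Finset.Icc 2 k, τ l ^ 2) ^
                ((((n : ℝ) - q + 1) * m + 2 * q) / ((((n : ℝ) - q + 1) * m + 2 * q) - 1)))) ≤
        ENNReal.ofReal (C' * ε ^
          (2 * ((((n : ℝ) - q + 1) * m + 2 * q) / ((((n : ℝ) - q + 1) * m + 2 * q) - 1)))) := by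
  have hkq : k + q ≤ n := by omega
  have hkn : k < n := by omega
  have hk1n : (1:ℝ) ≤ (k:ℝ) := by exact_mod_cast hk1
  have hKN : (k:ℝ) + (q:ℝ) ≤ (n:ℝ) := by exact_mod_cast hkq
  have hQ1 : (1:ℝ) ≤ (q:ℝ) := by exact_mod_cast hq1
  have hN2 : (2:ℝ) ≤ (n:ℝ) := by exact_mod_cast hn
  have hm0 : (0:ℝ) < m := by linarith
  set r : ℝ := ((n : ℝ) - q + 1) * m + 2 * q with hr_def
  have hr_ge : 2 * (n:ℝ) + 2 ≤ r := by nlinarith [hKN, hQ1, hN2, hm]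
  have hr1 : (0:ℝ) < r - 1 := by linarith
  set γ : ℝ := r / (r - 1) with hγ_def
  have hγr : γ * (r - 1) = r := div_mul_cancel₀ _ (ne_of_gt hr1)
  have hγ1 : 1 < γ := (one_lt_div hr1).2 (by linarith)
  set α : ℝ := (2 * (n : ℝ) - 2 * (k : ℝ) - 1) * γ with hα_def
  have h2NK : (1:ℝ) ≤ 2 * (n:ℝ) - 2 * (k:ℝ) - 1 := by linarith
  have hα0 : 0 < α := mul_pos (by linarith) (by linarith)
  have hNK1 : (1:ℝ) ≤ (n:ℝ) - (k:ℝ) := by linarith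
  have hαr : α * (r - 1) = (2 * (n:ℝ) - 2 * (k:ℝ) - 1) * r := by
    rw [hα_def, mul_assoc, hγr]
  set s : ℝ := α / ((n:ℝ) - (k:ℝ)) with hs_def
  have hs0 : 0 < s := div_pos hα0 (by linarith)
  have hsα : s * ((n:ℝ) - (k:ℝ)) = α := div_mul_cancel₀ _ (by linarith)
  have hs2 : s < 2 := by
    rw [hs_def, div_lt_iff₀ (by linarith)]
    nlinarith [hαr, hr1, hr_ge, h2NK]
  set a : ℝ := s / 2 with ha_def
  have ha0 : 0 < a := by positivity
  have ha1 : a < 1 := by rw [ha_def]; linarith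
  have h1a : 0 < 1 - a := by linarith
  set A : ℝ := Real.pi ^ k * C ^ 2 * c ^ (2 * ((k:ℝ) - 1) * (1 - γ)) *
      (2 / (1 - a)) ^ (2 * (n - k)) * C ^ (2 * ((n:ℝ) - (k:ℝ)) * (1 - a)) with hA_def
  have hA0 : 0 < A := by
    apply _root_.mul_pos; apply _root_.mul_pos; apply _root_.mul_pos; apply _root_.mul_pos
    · exact pow_pos Real.pi_pos k
    · exact pow_pos hC 2
    · exact Real.rpow_pos_of_pos hc _
    · exact pow_pos (div_pos two_pos h1a) _
    · exact Real.rpow_pos_of_pos hC _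
  refine ⟨A, hA0, ?_⟩
  intro ε hε τ hτ0 hτmono hτ1 hτm hτ2
  set P : ℝ := ∏ l ∈ Finset.Icc 2 k, τ l ^ 2 with hP_def
  have hPpos : 0 < P := by
    apply Finset.prod_pos
    intro l hl
    rw [Finset.mem_Icc] at hl
    exact pow_pos (hτ0 l (by omega) (by omega)) 2
  have hτpos : ∀ i : Fin n, 0 < τ (i.1 + 1) := fun i => hτ0 _ (by omega) (by omega : i.1 + 1 ≤ n)
  -- the per-coordinate majorant
  set g : Fin n → ℂ → ℝ≥0∞ := fun i z =>
    if k ≤ (i:ℕ) then (ENNReal.ofReal |z.re|) ^ (-a) * (ENNReal.ofReal |z.im|) ^ (-a) else 1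
    with hg_def
  have hgmeas : ∀ i, Measurable (g i) := by
    intro i
    by_cases h : k ≤ (i:ℕ) <;> simp only [hg_def, h, if_true, if_false]
    · fun_prop
    · exact measurable_const
  set bb : ℕ → ℝ := fun j =>
    if k ≤ j then (2 / (1 - a) * τ (j + 1) ^ (1 - a)) ^ 2 else Real.pi * τ (j + 1) ^ 2
    with hbb_def
  have hbb0 : ∀ j, 0 ≤ bb j := by
    intro j
    by_cases h : k ≤ j <;> simp only [hbb_def, h, if_true, if_false]
    · positivity
    · positivity
  have key_pt : ∀ w : Fin n → ℂ,
      ENNReal.ofReal ((∑ l, ‖w l‖) ^ (-α)) ≤ ∏ i, g i (w i) := by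
    intro w
    classical
    set T := Finset.univ.filter (fun i : Fin n => k ≤ (i:ℕ)) with hT_def
    have hTI : T = Finset.Ici (⟨k, hkn⟩ : Fin n) := by
      ext i
      simp [hT_def, Finset.mem_filter, Finset.mem_Ici, Fin.le_def]
    have hTcard : T.card = n - k := by rw [hTI, Fin.card_Ici]
    have hprod : ∏ i, g i (w i) = ∏ i ∈ T,
        ((ENNReal.ofReal |(w i).re|) ^ (-a) * (ENNReal.ofReal |(w i).im|) ^ (-a)) := by
      rw [hT_def, Finset.prod_filter]
    rw [hprod]
    have hfne : ∀ x : ℝ, (ENNReal.ofReal x) ^ (-a) ≠ 0 := by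
      intro x h
      rw [ENNReal.rpow_eq_zero_iff] at h
      rcases h with ⟨_, h2⟩ | ⟨h1, _⟩
      · linarith
      · exact ENNReal.ofReal_ne_top h1
    by_cases hzero : ∃ i ∈ T, (w i).re = 0 ∨ (w i).im = 0
    · obtain ⟨i, hiT, hcs⟩ := hzero
      have htop : (ENNReal.ofReal |(w i).re|) ^ (-a) * (ENNReal.ofReal |(w i).im|) ^ (-a) = ⊤ := by
        rcases hcs with h | h
        · rw [h]
          simp only [abs_zero, ENNReal.ofReal_zero]
          rw [ENNReal.zero_rpow_of_neg (by linarith)]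
          exact ENNReal.top_mul (hfne _)
        · rw [h]
          simp only [abs_zero, ENNReal.ofReal_zero]
          rw [ENNReal.zero_rpow_of_neg (by linarith)]
          exact ENNReal.mul_top (hfne _)
      have : ∏ i ∈ T,
          ((ENNReal.ofReal |(w i).re|) ^ (-a) * (ENNReal.ofReal |(w i).im|) ^ (-a)) = ⊤ := by
        rw [← Finset.prod_erase_mul T _ hiT, htop]
        apply ENNReal.mul_top
        rw [Finset.prod_ne_zero_iff]
        intro j _
        exact mul_ne_zero (hfne _) (hfne _)
      rw [this]
      exact le_top
    · push_neg at hzero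
      have hui : ∀ i ∈ T, 0 < |(w i).re| ∧ 0 < |(w i).im| := fun i hi =>
        ⟨abs_pos.2 (hzero i hi).1, abs_pos.2 (hzero i hi).2⟩
      have hρpos : ∀ i ∈ T, 0 < ‖w i‖ := fun i hi =>
        lt_of_lt_of_le (hui i hi).1 (Complex.abs_re_le_norm _)
      have hNKne : ((n:ℝ) - (k:ℝ)) ≠ 0 := by linarith
      have hGM : ∏ i ∈ T, (‖w i‖) ^ (((n:ℝ)-(k:ℝ))⁻¹) ≤
          ∑ i ∈ T, (((n:ℝ)-(k:ℝ))⁻¹) * ‖w i‖ := by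
        apply Real.geom_mean_le_arith_mean_weighted T _ _ (fun i _ => by positivity)
          ?_ (fun i _ => norm_nonneg _)
        rw [Finset.sum_const, hTcard, nsmul_eq_mul]
        rw [Nat.cast_sub hkn.le]
        exact mul_inv_cancel₀ hNKne
      have hsum : ∑ i ∈ T, (((n:ℝ)-(k:ℝ))⁻¹) * ‖w i‖ ≤
          ∑ l, ‖w l‖ := by
        calc ∑ i ∈ T, (((n:ℝ)-(k:ℝ))⁻¹) * ‖w i‖
            ≤ ∑ i ∈ T, ‖w i‖ := Finset.sum_le_sum fun i _ =>
              mul_le_of_le_one_left (norm_nonneg _)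
                (inv_le_one_of_one_le₀ hNK1)
          _ ≤ ∑ l, ‖w l‖ := Finset.sum_le_sum_of_subset_of_nonneg
              (Finset.subset_univ T) (fun i _ _ => norm_nonneg _)
      have hGMpos : 0 < ∏ i ∈ T, (‖w i‖) ^ (((n:ℝ)-(k:ℝ))⁻¹) :=
        Finset.prod_pos fun i hi => Real.rpow_pos_of_pos (hρpos i hi) _
      have step1 : (∑ l, ‖w l‖) ^ (-α) ≤
          (∏ i ∈ T, ‖w i‖ ^ (((n:ℝ)-(k:ℝ))⁻¹)) ^ (-α) :=
        Real.rpow_le_rpow_of_nonpos hGMpos (hGM.trans hsum) (by linarith)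
      have step2 : (∏ i ∈ T, ‖w i‖ ^ (((n:ℝ)-(k:ℝ))⁻¹)) ^ (-α) =
          ∏ i ∈ T, ‖w i‖ ^ (-s) := by
        rw [← Real.finset_prod_rpow T _ (fun i _ => Real.rpow_nonneg (norm_nonneg _) _) (-α)]
        apply Finset.prod_congr rfl
        intro i _
        rw [← Real.rpow_mul (norm_nonneg _)]
        congr 1
        rw [hs_def, div_eq_mul_inv]
        ring
      have step3 : ∀ i ∈ T, ‖w i‖ ^ (-s) ≤
          |(w i).re| ^ (-a) * |(w i).im| ^ (-a) := by
        intro i hi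
        obtain ⟨hu, hv⟩ := hui i hi
        have hsq : Real.sqrt (|(w i).re| * |(w i).im|) ≤ ‖w i‖ :=
          my_sqrt_absmul_le (w i)
        have hsqpos : 0 < Real.sqrt (|(w i).re| * |(w i).im|) :=
          Real.sqrt_pos.2 (by positivity)
        calc ‖w i‖ ^ (-s)
            ≤ (Real.sqrt (|(w i).re| * |(w i).im|)) ^ (-s) :=
              Real.rpow_le_rpow_of_nonpos hsqpos hsq (by linarith)
          _ = (|(w i).re| * |(w i).im|) ^ (-a) := by
              rw [Real.sqrt_eq_rpow, ← Real.rpow_mul (by positivity)]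
              congr 1
              rw [ha_def]; ring
          _ = |(w i).re| ^ (-a) * |(w i).im| ^ (-a) :=
              Real.mul_rpow (abs_nonneg _) (abs_nonneg _)
      have hreal : (∑ l, ‖w l‖) ^ (-α) ≤
          ∏ i ∈ T, (|(w i).re| ^ (-a) * |(w i).im| ^ (-a)) := by
        refine (step1.trans ?_)
        rw [step2]
        exact Finset.prod_le_prod (fun i _ => Real.rpow_nonneg (norm_nonneg _) _) step3
      calc ENNReal.ofReal ((∑ l, ‖w l‖) ^ (-α))
          ≤ ENNReal.ofReal (∏ i ∈ T, (|(w i).re| ^ (-a) * |(w i).im| ^ (-a))) :=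
            ENNReal.ofReal_le_ofReal hreal
        _ = ∏ i ∈ T, ((ENNReal.ofReal |(w i).re|) ^ (-a) * (ENNReal.ofReal |(w i).im|) ^ (-a)) := by
            rw [ENNReal.ofReal_prod_of_nonneg (fun i _ =>
              mul_nonneg (Real.rpow_nonneg (abs_nonneg _) _) (Real.rpow_nonneg (abs_nonneg _) _))]
            apply Finset.prod_congr rfl
            intro i hi
            obtain ⟨hu, hv⟩ := hui i hi
            rw [ENNReal.ofReal_mul (Real.rpow_nonneg (abs_nonneg _) _),
              ← ENNReal.ofReal_rpow_of_pos hu, ← ENNReal.ofReal_rpow_of_pos hv]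

  have hSmeas : MeasurableSet {w : Fin n → ℂ | ∀ l : Fin n, ‖w l‖ < τ (l.1 + 1)} := by
    have : {w : Fin n → ℂ | ∀ l : Fin n, ‖w l‖ < τ (l.1 + 1)} =
        Set.pi Set.univ (fun l : Fin n => Metric.ball (0:ℂ) (τ (l.1 + 1))) := by
      ext w
      simp [Set.mem_pi, Metric.mem_ball, Complex.dist_eq]
    rw [this]
    exact MeasurableSet.univ_pi fun l => measurableSet_ball
  have fact : ∫⁻ w in {w : Fin n → ℂ | ∀ l : Fin n, ‖w l‖ < τ (l.1 + 1)},
      (∏ i, g i (w i)) = ∏ i, ∫⁻ z in Metric.ball (0:ℂ) (τ (i.1 + 1)), g i z := by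
    have hind : ∀ w : Fin n → ℂ,
        Set.indicator {w : Fin n → ℂ | ∀ l : Fin n, ‖w l‖ < τ (l.1 + 1)}
          (fun w => ∏ i, g i (w i)) w =
        ∏ i, (Metric.ball (0:ℂ) (τ (i.1 + 1))).indicator (g i) (w i) := by
      intro w
      by_cases hw : w ∈ {w : Fin n → ℂ | ∀ l : Fin n, ‖w l‖ < τ (l.1 + 1)}
      · rw [Set.indicator_of_mem hw]
        apply Finset.prod_congr rfl
        intro i _
        rw [Set.indicator_of_mem]
        rw [Metric.mem_ball, Complex.dist_eq, sub_zero]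
        exact hw i
      · rw [Set.indicator_of_notMem hw]
        simp only [Set.mem_setOf_eq, not_forall] at hw
        obtain ⟨l, hl⟩ := hw
        symm
        apply Finset.prod_eq_zero (Finset.mem_univ l)
        rw [Set.indicator_of_notMem]
        intro hmem
        apply hl
        rw [Metric.mem_ball, Complex.dist_eq, sub_zero] at hmem
        exact hmem
    rw [← lintegral_indicator hSmeas, lintegral_congr hind,
      my_lintegral_pi_prod n _ (fun i => (hgmeas i).indicator measurableSet_ball)]
    exact Finset.prod_congr rfl fun i _ => lintegral_indicator measurableSet_ball _

  have perfactor : ∀ i : Fin n,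
      (∫⁻ z in Metric.ball (0:ℂ) (τ (i.1 + 1)), g i z) ≤ ENNReal.ofReal (bb i.1) := by
    intro i
    by_cases h : k ≤ (i:ℕ)
    · simp only [hg_def, hbb_def, if_pos h]
      exact my_disc_lintegral a (τ (i.1 + 1)) ha0.le ha1 (hτpos i)
    · simp only [hg_def, hbb_def, if_neg h]
      rw [setLIntegral_one, Complex.volume_ball]
      apply le_of_eq
      rw [ENNReal.ofReal_mul Real.pi_pos.le, ← ENNReal.ofReal_pow (hτpos i).le, mul_comm]
      congr 1
      rw [← NNReal.coe_real_pi, ENNReal.ofReal_coe_nnreal]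

  have final_real : (∏ i : Fin n, bb i.1) * (P ^ γ)⁻¹ ≤ A * ε ^ (2 * γ) := by
    have hτ1pos : 0 < τ 1 := hτ0 1 le_rfl (by omega)
    have hFINnn : (0:ℝ) ≤ (2/(1-a) * (C * ε ^ (1/m)) ^ (1-a)) ^ (2*(n-k)) :=
      pow_nonneg (mul_nonneg (div_nonneg (by norm_num) h1a.le)
        (Real.rpow_nonneg (by positivity) _)) _
    have hGPnn : (0:ℝ) ≤ (((c * ε ^ ((1:ℝ)/2)) ^ 2) ^ (k-1)) ^ (1-γ) :=
      Real.rpow_nonneg (by positivity) _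
    -- split the product
    have hsplit : (∏ i : Fin n, bb i.1) =
        (∏ j ∈ Finset.range k, bb j) * ∏ j ∈ Finset.Ico k n, bb j := by
      rw [Fin.prod_univ_eq_prod_range (fun j => bb j) n,
        ← Finset.prod_range_mul_prod_Ico _ hkn.le]
    have hlow : ∏ j ∈ Finset.range k, bb j = Real.pi ^ k * (τ 1 ^ 2 * P) := by
      have h1 : ∏ j ∈ Finset.range k, bb j =
          ∏ j ∈ Finset.range k, (Real.pi * τ (j+1) ^ 2) := by
        refine Finset.prod_congr rfl fun j hj => ?_
        rw [Finset.mem_range] at hj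
        simp only [hbb_def]
        rw [if_neg (by omega)]
      rw [h1, Finset.prod_mul_distrib, Finset.prod_const, Finset.card_range]
      congr 1
      have h2 : ∏ j ∈ Finset.range k, τ (j+1) ^ 2 = ∏ l ∈ Finset.Icc 1 k, τ l ^ 2 := by
        rw [← Finset.Ico_add_one_right_eq_Icc, Finset.prod_Ico_eq_prod_range]
        simp [add_comm]
      have h3 : Finset.Icc 1 k = insert 1 (Finset.Icc 2 k) := by
        ext x
        simp only [Finset.mem_Icc, Finset.mem_insert]
        omega
      rw [h2, h3, Finset.prod_insert (by simp [Finset.mem_Icc]), hP_def]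
    have hfin : ∏ j ∈ Finset.Ico k n, bb j ≤
        (2/(1-a) * (C * ε ^ (1/m)) ^ (1-a)) ^ (2*(n-k)) := by
      have hbound : ∀ j ∈ Finset.Ico k n, bb j ≤ (2/(1-a) * (C * ε ^ (1/m)) ^ (1-a)) ^ 2 := by
        intro j hj
        rw [Finset.mem_Ico] at hj
        simp only [hbb_def]
        rw [if_pos hj.1]
        apply pow_le_pow_left₀ (mul_nonneg (div_nonneg (by norm_num) h1a.le)
          (Real.rpow_nonneg (hτ0 (j+1) (by omega) (by omega)).le _))
        apply mul_le_mul_of_nonneg_left _ (div_nonneg (by norm_num) h1a.le)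
        exact Real.rpow_le_rpow (hτ0 (j+1) (by omega) (by omega)).le
          (hτm (j+1) (by omega) (by omega)) (by linarith)
      calc ∏ j ∈ Finset.Ico k n, bb j
          ≤ ∏ j ∈ Finset.Ico k n, (2/(1-a) * (C * ε ^ (1/m)) ^ (1-a)) ^ 2 :=
            Finset.prod_le_prod (fun j _ => hbb0 j) hbound
        _ = ((2/(1-a) * (C * ε ^ (1/m)) ^ (1-a)) ^ 2) ^ (n - k) := by
            rw [Finset.prod_const, Nat.card_Ico]
        _ = (2/(1-a) * (C * ε ^ (1/m)) ^ (1-a)) ^ (2*(n-k)) := by rw [← pow_mul]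
    have hPlow : ((c * ε ^ ((1:ℝ)/2)) ^ 2) ^ (k-1) ≤ P := by
      have hb : ∀ l ∈ Finset.Icc 2 k, (c * ε ^ ((1:ℝ)/2)) ^ 2 ≤ τ l ^ 2 := by
        intro l hl
        rw [Finset.mem_Icc] at hl
        have h2l : τ 2 ≤ τ l := hτmono 2 l (by omega) (by omega) (by omega)
        exact pow_le_pow_left₀ (by positivity) (hτ2.trans h2l) 2
      calc ((c * ε ^ ((1:ℝ)/2)) ^ 2) ^ (k-1)
          = ∏ _l ∈ Finset.Icc 2 k, (c * ε ^ ((1:ℝ)/2)) ^ 2 := by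
            rw [Finset.prod_const, Nat.card_Icc, show k + 1 - 2 = k - 1 by omega]
        _ ≤ P := Finset.prod_le_prod (fun l _ => by positivity) hb
    have hPγ : (P ^ γ)⁻¹ * P ≤ (((c * ε ^ ((1:ℝ)/2)) ^ 2) ^ (k-1)) ^ (1-γ) := by
      have hP0 : (0:ℝ) < ((c * ε ^ ((1:ℝ)/2)) ^ 2) ^ (k-1) := by positivity
      have h1 : (P ^ γ)⁻¹ * P = P ^ (1-γ) := by
        rw [show (1:ℝ) - γ = 1 + (-γ) by ring, Real.rpow_add hPpos, Real.rpow_one,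
          Real.rpow_neg hPpos.le]
        ring
      rw [h1]
      exact Real.rpow_le_rpow_of_nonpos hP0 hPlow (by linarith)
    have hmaster : (∏ i : Fin n, bb i.1) * (P ^ γ)⁻¹ ≤
        (Real.pi ^ k * τ 1 ^ 2 * ((2/(1-a) * (C * ε ^ (1/m)) ^ (1-a)) ^ (2*(n-k)))) *
          ((((c * ε ^ ((1:ℝ)/2)) ^ 2) ^ (k-1)) ^ (1-γ)) := by
      have heq : (∏ i : Fin n, bb i.1) * (P ^ γ)⁻¹ =
          (Real.pi ^ k * τ 1 ^ 2 * (∏ j ∈ Finset.Ico k n, bb j)) * ((P ^ γ)⁻¹ * P) := by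
        rw [hsplit, hlow]
        ring
      rw [heq]
      apply mul_le_mul _ hPγ (mul_nonneg (inv_nonneg.2 (Real.rpow_nonneg hPpos.le _)) hPpos.le)
        (mul_nonneg (mul_nonneg (pow_nonneg Real.pi_pos.le _) (sq_nonneg _)) hFINnn)
      exact mul_le_mul_of_nonneg_left hfin
        (mul_nonneg (pow_nonneg Real.pi_pos.le _) (sq_nonneg _))
    -- rewrite the two ε-dependent factors
    have hGPeq : (((c * ε ^ ((1:ℝ)/2)) ^ 2) ^ (k-1)) ^ (1-γ) =
        c ^ (2*((k:ℝ)-1)*(1-γ)) * ε ^ (((k:ℝ)-1)*(1-γ)) := by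
      have hbase : (c * ε ^ ((1:ℝ)/2)) ^ 2 = c ^ 2 * ε := by
        rw [mul_pow, ← Real.rpow_natCast (ε ^ ((1:ℝ)/2)) 2, ← Real.rpow_mul hε.le]
        norm_num
      rw [hbase, ← Real.rpow_natCast (c ^ 2 * ε) (k-1), ← Real.rpow_mul (by positivity),
        Nat.cast_sub hk1, Real.mul_rpow (by positivity) hε.le, Nat.cast_one,
        ← Real.rpow_natCast c 2, ← Real.rpow_mul hc.le]
      congr 1
      congr 1
      push_cast
      ring
    have hC3 : ((C * ε ^ (1/m)) ^ (1-a)) ^ (2*(n-k)) =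
        C ^ (2*((n:ℝ)-(k:ℝ))*(1-a)) * ε ^ ((1/m)*(1-a)*(2*((n:ℝ)-(k:ℝ)))) := by
      rw [Real.mul_rpow hC.le (Real.rpow_nonneg hε.le _), ← Real.rpow_mul hε.le, mul_pow,
        ← Real.rpow_natCast (C ^ (1-a)) (2*(n-k)), ← Real.rpow_natCast (ε ^ (1/m*(1-a))) (2*(n-k)),
        ← Real.rpow_mul hC.le, ← Real.rpow_mul hε.le]
      have hcast : ((2*(n-k) : ℕ):ℝ) = 2*((n:ℝ)-(k:ℝ)) := by
        push_cast [Nat.cast_sub hkn.le]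
        ring
      rw [hcast]
      congr 1
      all_goals congr 1
      all_goals ring

    have hFINeq : (2/(1-a) * (C * ε ^ (1/m)) ^ (1-a)) ^ (2*(n-k)) =
        (2/(1-a)) ^ (2*(n-k)) *
          (C ^ (2*((n:ℝ)-(k:ℝ))*(1-a)) * ε ^ ((1/m)*(1-a)*(2*((n:ℝ)-(k:ℝ))))) := by
      rw [mul_pow, hC3]
    have assemble : ∀ t : ℝ, τ 1 ^ 2 ≤ C ^ 2 * ε ^ t →
        ε ^ (t + (((k:ℝ)-1)*(1-γ) + (1/m)*(1-a)*(2*((n:ℝ)-(k:ℝ))))) ≤ ε ^ (2*γ) →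
        (∏ i : Fin n, bb i.1) * (P ^ γ)⁻¹ ≤ A * ε ^ (2*γ) := by
      intro t ht hεE
      refine hmaster.trans ?_
      calc (Real.pi ^ k * τ 1 ^ 2 * ((2/(1-a) * (C * ε ^ (1/m)) ^ (1-a)) ^ (2*(n-k)))) *
            ((((c * ε ^ ((1:ℝ)/2)) ^ 2) ^ (k-1)) ^ (1-γ))
          ≤ (Real.pi ^ k * (C ^ 2 * ε ^ t) *
              ((2/(1-a) * (C * ε ^ (1/m)) ^ (1-a)) ^ (2*(n-k)))) *
            ((((c * ε ^ ((1:ℝ)/2)) ^ 2) ^ (k-1)) ^ (1-γ)) := by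
            apply mul_le_mul_of_nonneg_right _ hGPnn
            apply mul_le_mul_of_nonneg_right _ hFINnn
            exact mul_le_mul_of_nonneg_left ht (pow_nonneg Real.pi_pos.le _)
        _ = A * ε ^ (t + (((k:ℝ)-1)*(1-γ) + (1/m)*(1-a)*(2*((n:ℝ)-(k:ℝ))))) := by
            rw [hFINeq, hGPeq, hA_def, Real.rpow_add hε, Real.rpow_add hε]
            ring
        _ ≤ A * ε ^ (2*γ) := mul_le_mul_of_nonneg_left hεE hA0.le
    -- exponent inequalities
    have hNKQ : (0:ℝ) ≤ ((n:ℝ)-(k:ℝ)) - (q:ℝ) := by linarith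
    have hid1 : ((2 + (((k:ℝ)-1)*(1-γ) + (1/m)*(1-a)*(2*((n:ℝ)-(k:ℝ))))) - 2*γ) * (m*(r-1)) =
        (m-2) * (((n:ℝ)-(k:ℝ)) - (q:ℝ)) := by
      have hNKne : ((n:ℝ)-(k:ℝ)) ≠ 0 := by linarith
      have hrne : r - 1 ≠ 0 := ne_of_gt hr1
      have hmne : m ≠ 0 := ne_of_gt hm0
      rw [ha_def, hs_def, hα_def, hγ_def]
      field_simp
      rw [hr_def]
      ring
    have hE1ge : 2*γ ≤ 2 + (((k:ℝ)-1)*(1-γ) + (1/m)*(1-a)*(2*((n:ℝ)-(k:ℝ)))) := by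
      have h0 : (0:ℝ) ≤ ((2 + (((k:ℝ)-1)*(1-γ) + (1/m)*(1-a)*(2*((n:ℝ)-(k:ℝ))))) - 2*γ) *
          (m*(r-1)) := by
        rw [hid1]
        exact mul_nonneg (by linarith) hNKQ
      have hX := (mul_nonneg_iff_of_pos_right (mul_pos hm0 hr1)).mp h0
      linarith
    have hE2le : 2*(1/m) + (((k:ℝ)-1)*(1-γ) + (1/m)*(1-a)*(2*((n:ℝ)-(k:ℝ)))) ≤ 2*γ := by
      have hid2 : ((2*(1/m) + (((k:ℝ)-1)*(1-γ) + (1/m)*(1-a)*(2*((n:ℝ)-(k:ℝ))))) - 2*γ) * (m*(r-1)) =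
          (m-2) * (((n:ℝ)-(k:ℝ)) - (q:ℝ)) + (2 - 2*m) * (r-1) := by
        have hNKne : ((n:ℝ)-(k:ℝ)) ≠ 0 := by linarith
        have hrne : r - 1 ≠ 0 := ne_of_gt hr1
        have hmne : m ≠ 0 := ne_of_gt hm0
        rw [ha_def, hs_def, hα_def, hγ_def]
        field_simp
        rw [hr_def]
        ring
      have hb1 : (m-2) * (((n:ℝ)-(k:ℝ)) - (q:ℝ)) ≤ (m-2) * (r-1) :=
        mul_le_mul_of_nonneg_left (by linarith) (by linarith)
      have hb2 : (m-2) * (r-1) ≤ (2*m-2) * (r-1) :=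
        mul_le_mul_of_nonneg_right (by linarith) hr1.le
      have hXc : ((2*(1/m) + (((k:ℝ)-1)*(1-γ) + (1/m)*(1-a)*(2*((n:ℝ)-(k:ℝ))))) - 2*γ) *
          (m*(r-1)) ≤ 0 := by
        rw [hid2]
        linarith
      by_contra hcon
      push_neg at hcon
      exact absurd hXc (not_le.2 (mul_pos (by linarith) (mul_pos hm0 hr1)))
    rcases le_or_gt ε 1 with hε1 | hε1
    · apply assemble 2
      · calc τ 1 ^ 2 ≤ (C * ε) ^ 2 := pow_le_pow_left₀ hτ1pos.le hτ1 2
          _ = C ^ 2 * ε ^ (2:ℝ) := by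
            rw [mul_pow, ← Real.rpow_natCast ε 2]
            norm_num
      · exact Real.rpow_le_rpow_of_exponent_ge hε hε1 hE1ge
    · apply assemble (2*(1/m))
      · calc τ 1 ^ 2 ≤ (C * ε ^ (1/m)) ^ 2 :=
            pow_le_pow_left₀ hτ1pos.le (hτm 1 le_rfl (by omega)) 2
          _ = C ^ 2 * ε ^ (2*(1/m)) := by
            rw [mul_pow, ← Real.rpow_natCast (ε ^ (1/m)) 2, ← Real.rpow_mul hε.le]
            congr 1
            all_goals congr 1
            all_goals push_cast
            all_goals ring
      · exact Real.rpow_le_rpow_of_exponent_le hε1.le hE2le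

  have hXnn : ∀ w : Fin n → ℂ, 0 ≤ (∑ l, ‖w l‖) ^ (-α) :=
    fun w => Real.rpow_nonneg (Finset.sum_nonneg fun l _ => (norm_nonneg _)) _
  calc ∫⁻ w in {w : Fin n → ℂ | ∀ l : Fin n, ‖w l‖ < τ (l.1 + 1)},
      ENNReal.ofReal ((∑ l, ‖w l‖) ^ (-α) / P ^ γ)
      = ∫⁻ w in {w : Fin n → ℂ | ∀ l : Fin n, ‖w l‖ < τ (l.1 + 1)},
        ENNReal.ofReal ((∑ l, ‖w l‖) ^ (-α)) * ENNReal.ofReal ((P ^ γ)⁻¹) := by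
        apply lintegral_congr
        intro w
        rw [div_eq_mul_inv, ENNReal.ofReal_mul (hXnn w)]
    _ ≤ ∫⁻ w in {w : Fin n → ℂ | ∀ l : Fin n, ‖w l‖ < τ (l.1 + 1)},
        (∏ i, g i (w i)) * ENNReal.ofReal ((P ^ γ)⁻¹) :=
        lintegral_mono fun w => mul_le_mul_left (key_pt w) _
    _ = (∫⁻ w in {w : Fin n → ℂ | ∀ l : Fin n, ‖w l‖ < τ (l.1 + 1)},
        ∏ i, g i (w i)) * ENNReal.ofReal ((P ^ γ)⁻¹) :=
        lintegral_mul_const' _ _ ofReal_ne_top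
    _ ≤ (∏ i : Fin n, ENNReal.ofReal (bb i.1)) * ENNReal.ofReal ((P ^ γ)⁻¹) := by
        rw [fact]
        exact mul_le_mul_left (Finset.prod_le_prod' fun i _ => perfactor i) _
    _ = ENNReal.ofReal ((∏ i : Fin n, bb i.1) * (P ^ γ)⁻¹) := by
        rw [← ENNReal.ofReal_prod_of_nonneg (fun i _ => hbb0 i.1),
          ← ENNReal.ofReal_mul (Finset.prod_nonneg fun i _ => hbb0 i.1)]
    _ ≤ ENNReal.ofReal (A * ε ^ (2 * γ)) := ENNReal.ofReal_le_ofReal final_real
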